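/- Let A be a unital C*-algebra, let φ be a positive linear functional on A with φ(1) ≤ 1, let p ∈ A be a projection, and let a ∈ A with 0 ≤ a ≤ 1. Then for every x ∈ A with 0 ≤ x ≤ 1, |φ( ((1−p)(a x a)p + p(a x a)(1−p))/2 )| ≤ 2·(φ((p a p)²))^{1/4} + (φ((p a p)²))^{1/2}. -/

import Mathlib

open ComplexOrder

section aux
variable {A : Type*} [CStarAlgebra A] [PartialOrder A] [StarOrderedRing A]
variable (φ : A →ₗ[ℂ] ℂ)

lemma aux_im_sa (hφ : ∀ b : A, 0 ≤ b → 0 ≤ φ b) (b : A) (hb : IsSelfAdjoint b) :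
    (φ b).im = 0 := by
  have h1 : (0:A) ≤ algebraMap ℝ A ‖b‖ - b := sub_nonneg.mpr hb.le_algebraMap_norm_self
  have h2 := (Complex.nonneg_iff.mp (hφ _ h1)).2
  have h3 := (Complex.nonneg_iff.mp (hφ 1 zero_le_one)).2
  have h4 : φ (algebraMap ℝ A ‖b‖ - b) = (‖b‖ : ℂ) * φ 1 - φ b := by
    rw [map_sub]
    congr 1
    rw [IsScalarTower.algebraMap_apply ℝ ℂ A, Algebra.algebraMap_eq_smul_one, map_smul,
      smul_eq_mul]
    rfl
  rw [h4] at h2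
  simp only [Complex.sub_im, Complex.mul_im, Complex.ofReal_re, Complex.ofReal_im] at h2
  rw [← h3] at h2
  linarith

lemma aux_map_star (hφ : ∀ b : A, 0 ≤ b → 0 ≤ φ b) (z : A) :
    φ (star z) = (starRingEnd ℂ) (φ z) := by
  have hb : (φ (z + star z)).im = 0 := by
    refine aux_im_sa φ hφ _ ?_
    simp [IsSelfAdjoint, star_add, add_comm]
  have hc : (φ (Complex.I • (z - star z))).im = 0 := by
    refine aux_im_sa φ hφ _ ?_
    simp only [IsSelfAdjoint, star_smul, star_sub, star_star, Complex.star_def,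
      Complex.conj_I, neg_smul, smul_sub, neg_sub]
    abel
  rw [map_add] at hb
  rw [map_smul, map_sub, smul_eq_mul] at hc
  simp only [Complex.add_im] at hb
  simp only [Complex.mul_im, Complex.I_re, Complex.I_im, Complex.sub_re, Complex.sub_im,
    zero_mul, one_mul, zero_add] at hc
  apply Complex.ext <;> simp only [Complex.conj_re, Complex.conj_im] <;> linarith

lemma aux_cs (hφ : ∀ b : A, 0 ≤ b → 0 ≤ φ b) (x y : A) :
    ‖φ (star x * y)‖ ^ 2 ≤ (φ (star x * x)).re * (φ (star y * y)).re := by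
  set c := φ (star x * y) with hc_def
  have hα := Complex.nonneg_iff.mp (hφ _ (star_mul_self_nonneg x))
  have hβ := Complex.nonneg_iff.mp (hφ _ (star_mul_self_nonneg y))
  by_cases hc : c = 0
  · rw [hc]
    simpa using mul_nonneg hα.1 hβ.1
  · have habs : (0:ℝ) < ‖c‖ := norm_pos_iff.mpr hc
    have hcc : (starRingEnd ℂ) c * c = (‖c‖ : ℂ) * (‖c‖ : ℂ) := by
      rw [mul_comm, Complex.mul_conj, Complex.normSq_eq_norm_sq]
      push_cast
      ring
    set u : ℂ := (starRingEnd ℂ) c / (‖c‖ : ℂ) with hu_def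
    have hu1 : u * c = (‖c‖ : ℂ) := by
      rw [hu_def, div_mul_eq_mul_div, hcc, mul_div_assoc,
        div_self (by exact_mod_cast habs.ne'), mul_one]
    have hu2 : (starRingEnd ℂ) u * (starRingEnd ℂ) c = (‖c‖ : ℂ) := by
      rw [← map_mul, hu1, Complex.conj_ofReal]
    have hu3 : (starRingEnd ℂ) u * u = 1 := by
      rw [hu_def, map_div₀, Complex.conj_conj, Complex.conj_ofReal, div_mul_div_comm,
        mul_comm c, hcc, div_self (by exact_mod_cast (mul_pos habs habs).ne')]
    have key : ∀ t : ℝ, 0 ≤ (φ (star x * x)).re * (t * t)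
        + (2 * ‖c‖) * t + (φ (star y * y)).re := by
      intro t
      have h0 := hφ _ (star_mul_self_nonneg ((t:ℂ) • x + u • y))
      have hyx : φ (star y * x) = (starRingEnd ℂ) c := by
        rw [hc_def, ← aux_map_star φ hφ]
        congr 1
        simp [star_mul]
      have hexp : φ (star ((t:ℂ) • x + u • y) * ((t:ℂ) • x + u • y))
          = (t:ℂ)*(t:ℂ) * φ (star x * x) + (t:ℂ) * (u * c)
            + (t:ℂ) * ((starRingEnd ℂ) u * (starRingEnd ℂ) c)
            + ((starRingEnd ℂ) u * u) * φ (star y * y) := by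
        simp only [star_add, star_smul, add_mul, mul_add, smul_mul_assoc, mul_smul_comm,
          map_add, map_smul, smul_eq_mul, smul_smul, Complex.star_def, Complex.conj_ofReal,
          hyx, ← hc_def]
        ring
      rw [hexp, hu1, hu2, hu3] at h0
      have h1 := (Complex.nonneg_iff.mp h0).1
      simp only [Complex.add_re, Complex.mul_re, Complex.ofReal_re, Complex.ofReal_im,
        Complex.one_re, Complex.one_im, hα.2.symm] at h1
      convert h1 using 1
      ring
    have hd := discrim_le_zero key
    rw [discrim] at hd
    nlinarith [hα.1, hβ.1]

lemma aux_re_mono (hφ : ∀ b : A, 0 ≤ b → 0 ≤ φ b) {c d : A} (h : c ≤ d) :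
    (φ c).re ≤ (φ d).re := by
  have h0 := hφ _ (sub_nonneg.mpr h)
  rw [map_sub] at h0
  have := (Complex.nonneg_iff.mp h0).1
  simp only [Complex.sub_re] at this
  linarith

lemma aux_le_one (hφ : ∀ b : A, 0 ≤ b → 0 ≤ φ b) (hφ1 : φ 1 ≤ 1)
    (b : A) (hb : 0 ≤ b) (hnb : ‖b‖ ≤ 1) : (φ b).re ≤ 1 := by
  have hb1 : b ≤ 1 := (CStarAlgebra.norm_le_one_iff_of_nonneg b hb).mp hnb
  have h1 := aux_re_mono φ hφ hb1
  have h2 : (φ 1).re ≤ 1 := by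
    have := (Complex.le_def.mp hφ1).1
    simpa using this
  linarith

end aux

theorem stmt5 {A : Type*} [CStarAlgebra A] [PartialOrder A] [StarOrderedRing A]
    (φ : A →ₗ[ℂ] ℂ) (hφ : ∀ b : A, 0 ≤ b → 0 ≤ φ b) (hφ1 : φ 1 ≤ 1)
    (p : A) (hp_sa : p = star p) (hp_idem : p * p = p)
    (a : A) (ha0 : 0 ≤ a) (ha1 : a ≤ 1) :
    ∀ x : A, 0 ≤ x → x ≤ 1 →
      ‖φ ((1 - p) * (a * x * a) * p + p * (a * x * a) * (1 - p)) / 2‖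
        ≤ 2 * (φ ((p * a * p) ^ 2)).re ^ ((1 : ℝ) / 4)
          + (φ ((p * a * p) ^ 2)).re ^ ((1 : ℝ) / 2) := by
  intro x hx0 hx1
  have hsa : star a = a := (IsSelfAdjoint.of_nonneg ha0).star_eq
  have hsx : star x = x := (IsSelfAdjoint.of_nonneg hx0).star_eq
  have hsp : star p = p := hp_sa.symm
  have hsq : star (1 - p) = 1 - p := by simp [star_sub, hsp]
  have hqq : (1 - p) * (1 - p) = 1 - p := by
    simp only [sub_mul, mul_sub, one_mul, mul_one, hp_idem]
    abel
  have hp0 : (0 : A) ≤ p := by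
    have := star_mul_self_nonneg p
    rwa [hsp, hp_idem] at this
  have hq0 : (0 : A) ≤ 1 - p := by
    have := star_mul_self_nonneg (1 - p)
    rwa [hsq, hqq] at this
  have hq1 : (1 : A) - p ≤ 1 := sub_le_self 1 hp0
  have hp1 : p ≤ 1 := by
    have := sub_nonneg.mp hq0
    exact this
  -- names
  set s : A := (1 - p) * (a * x * a) * p with hs_def
  have hst : p * (a * x * a) * (1 - p) = star s := by
    simp only [hs_def, star_mul, hsa, hsx, hsp, hsq, mul_assoc]
  set T : ℝ := (φ ((p * a * p) ^ 2)).re with hT_def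
  have hpap_sa : star (p * a * p) = p * a * p := by
    simp [star_mul, hsa, hsp, mul_assoc]
  have hT0 : 0 ≤ T := by
    have h := hφ _ (star_mul_self_nonneg (p * a * p))
    rw [hpap_sa, ← sq] at h
    exact (Complex.nonneg_iff.mp h).1
  -- LHS = |Re (φ s)|
  have hLHS : ‖φ ((1 - p) * (a * x * a) * p + p * (a * x * a) * (1 - p)) / 2‖
      = |(φ s).re| := by
    rw [hst, map_add, aux_map_star φ hφ, Complex.add_conj]
    rw [norm_div]
    simp [abs_mul]
    rfl
  -- Cauchy-Schwarz no.1 : s = star (x * a * (1-p)) * (a * p)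
  have hs_eq : s = star (x * a * (1 - p)) * (a * p) := by
    simp only [hs_def, star_mul, hsa, hsx, hsq, mul_assoc]
  have cs1 := aux_cs φ hφ (x * a * (1 - p)) (a * p)
  rw [← hs_eq] at cs1
  -- first factor ≤ 1
  have hF1 : (φ (star (x * a * (1 - p)) * (x * a * (1 - p)))).re ≤ 1 := by
    refine aux_le_one φ hφ hφ1 _ (star_mul_self_nonneg _) ?_
    rw [CStarRing.norm_star_mul_self]
    have hx' : ‖x‖ ≤ 1 := (CStarAlgebra.norm_le_one_iff_of_nonneg x hx0).mpr hx1
    have ha' : ‖a‖ ≤ 1 := (CStarAlgebra.norm_le_one_iff_of_nonneg a ha0).mpr ha1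
    have hq' : ‖(1 : A) - p‖ ≤ 1 := (CStarAlgebra.norm_le_one_iff_of_nonneg _ hq0).mpr hq1
    have h1 : ‖x * a * (1 - p)‖ ≤ 1 :=
      le_trans (norm_mul_le _ _) (mul_le_one₀
        (le_trans (norm_mul_le _ _) (mul_le_one₀ hx' (norm_nonneg a) ha'))
        (norm_nonneg _) hq')
    exact mul_le_one₀ h1 (norm_nonneg _) h1
  -- second factor ≤ (φ (p * a * p)).re
  have haa : a * a ≤ a := by
    obtain ⟨r, hr0, hrr⟩ : ∃ r : A, 0 ≤ r ∧ r * r = a :=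
      ⟨CFC.sqrt a, CFC.sqrt_nonneg a, CFC.sqrt_mul_sqrt_self a ha0⟩
    have h := star_left_conjugate_le_conjugate ha1 r
    rw [(IsSelfAdjoint.of_nonneg hr0).star_eq, mul_one] at h
    have h2 : r * a * r = a * a := by
      rw [← hrr]
      simp [mul_assoc]
    rwa [h2, hrr] at h
  have hF2 : (φ (star (a * p) * (a * p))).re ≤ (φ (p * a * p)).re := by
    have hconj : p * (a * a) * p ≤ p * a * p := by
      have := star_left_conjugate_le_conjugate haa p
      rwa [hsp] at this
    have heq : star (a * p) * (a * p) = p * (a * a) * p := by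
      simp [star_mul, hsa, hsp, mul_assoc]
    rw [heq]
    exact aux_re_mono φ hφ hconj
  set R : ℝ := (φ (p * a * p)).re with hR_def
  have hR0 : 0 ≤ R := by
    have h := hφ _ (star_left_conjugate_nonneg ha0 p)
    rw [hsp] at h
    exact (Complex.nonneg_iff.mp h).1
  have hF2' : (0:ℝ) ≤ (φ (star (a * p) * (a * p))).re :=
    (Complex.nonneg_iff.mp (hφ _ (star_mul_self_nonneg _))).1
  have h1 : ‖φ s‖ ^ 2 ≤ R := by
    calc ‖φ s‖ ^ 2
        ≤ (φ (star (x * a * (1 - p)) * (x * a * (1 - p)))).re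
            * (φ (star (a * p) * (a * p))).re := cs1
      _ ≤ R := by nlinarith
  -- Cauchy-Schwarz no.2
  have cs2 := aux_cs φ hφ 1 (p * a * p)
  rw [star_one, one_mul, one_mul, hpap_sa, ← sq] at cs2
  have hφ1re : (φ (1:A)).re ≤ 1 := by
    have := (Complex.le_def.mp hφ1).1
    simpa using this
  have hφ1re0 : 0 ≤ (φ (1:A)).re := (Complex.nonneg_iff.mp (hφ 1 zero_le_one)).1
  have h2 : R ^ 2 ≤ T := by
    have hra : R ≤ ‖φ (p * a * p)‖ := Complex.re_le_norm _
    nlinarith [norm_nonneg (φ (p * a * p))]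
  -- combine: |φ s| ≤ T ^ (1/4)
  have h3 : ‖φ s‖ ≤ T ^ ((1:ℝ)/4) := by
    have h4 : ‖φ s‖ ^ 4 ≤ T := by nlinarith [norm_nonneg (φ s)]
    have h5 : (T ^ ((1:ℝ)/4)) ^ 4 = T := by
      rw [← Real.rpow_natCast (T ^ ((1:ℝ)/4)) 4, ← Real.rpow_mul hT0]
      norm_num
    refine le_of_pow_le_pow_left₀ (n := 4) (by norm_num) (Real.rpow_nonneg hT0 _) ?_
    rw [h5]
    exact h4
  rw [hLHS]
  have h6 : |(φ s).re| ≤ ‖φ s‖ := Complex.abs_re_le_norm _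
  have h7 : 0 ≤ T ^ ((1:ℝ)/4) := Real.rpow_nonneg hT0 _
  have h8 : 0 ≤ T ^ ((1:ℝ)/2) := Real.rpow_nonneg hT0 _
  linarith
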